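/- For every q ∈ {1,…,N}, writing s := (N − q)/(N − 1), one has the explicit formula φ((1−q)δ) = (h − δ^μ)·(6s⁵ − 15s⁴ + 10s³ − 1). Moreover, if h ≥ δ^μ, then δ^μ − h ≤ φ((1−q)δ) ≤ 0 for all q ∈ {1,…,N}. -/
import Mathlib


noncomputable section

/-- The smeared-out Heaviside shape function `S(z) = z - sin(2πz)/(2π)`. -/
def Sfun (z : ℝ) : ℝ := z - Real.sin (2 * Real.pi * z) / (2 * Real.pi)

/-- The quintic shape function `P(z) = z³(6z² - 15z + 10)`. -/
def Pfun (z : ℝ) : ℝ := z ^ 3 * (6 * z ^ 2 - 15 * z + 10)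

/-- explicit value of φ((1-q)δ) and its bounds. -/
theorem phi_at_shift
    (N : ℕ) (hN : 2 ≤ N) (δ : ℝ) (hδ : 0 < δ) (μ : ℝ) (hμ : 0 < μ)
    (h : ℝ) (hh : h = (N : ℝ) * δ)
    (φ : ℝ → ℝ)
    (hφS : ∀ j : ℤ, ∀ t ∈ Set.Icc ((j : ℝ) * h) ((j : ℝ) * h + δ),
      φ t = (j : ℝ) * h + δ ^ μ * Sfun ((t - (j : ℝ) * h) / δ))
    (hφP : ∀ j : ℤ, ∀ t ∈ Set.Icc ((j : ℝ) * h + δ) (((j : ℝ) + 1) * h),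
      φ t = (j : ℝ) * h + δ ^ μ + (h - δ ^ μ) * Pfun ((t - (j : ℝ) * h - δ) / (h - δ)))
    :
    ∀ q : ℕ, 1 ≤ q → q ≤ N →
      φ ((1 - (q : ℝ)) * δ) =
        (h - δ ^ μ) *
          (6 * (((N : ℝ) - (q : ℝ)) / ((N : ℝ) - 1)) ^ 5 -
            15 * (((N : ℝ) - (q : ℝ)) / ((N : ℝ) - 1)) ^ 4 +
            10 * (((N : ℝ) - (q : ℝ)) / ((N : ℝ) - 1)) ^ 3 - 1) ∧
      (δ ^ μ ≤ h →
        δ ^ μ - h ≤ φ ((1 - (q : ℝ)) * δ) ∧ φ ((1 - (q : ℝ)) * δ) ≤ 0) := by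
  intro q hq1 hqN
  have hN1 : (1:ℝ) < (N:ℝ) := by exact_mod_cast Nat.lt_of_lt_of_le one_lt_two hN
  have hNq : (q:ℝ) ≤ (N:ℝ) := by exact_mod_cast hqN
  have hq1' : (1:ℝ) ≤ (q:ℝ) := by exact_mod_cast hq1
  set s : ℝ := ((N:ℝ) - q) / ((N:ℝ) - 1) with hs
  have hden : (0:ℝ) < (N:ℝ) - 1 := by linarith
  have hs0 : 0 ≤ s := div_nonneg (by linarith) (by linarith)
  have hs1 : s ≤ 1 := (div_le_one hden).mpr (by linarith)
  have hval : φ ((1 - (q:ℝ)) * δ) = (h - δ ^ μ) * (6*s^5 - 15*s^4 + 10*s^3 - 1) := by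
    have hmem : (1 - (q:ℝ)) * δ ∈ Set.Icc (((-1:ℤ):ℝ) * h + δ) ((((-1:ℤ):ℝ) + 1) * h) := by
      constructor
      · push_cast; rw [hh]; nlinarith
      · push_cast; rw [hh]; nlinarith
    have hrw := hφP (-1) _ hmem
    rw [hrw]
    have hhδ : h - δ ≠ 0 := by rw [hh]; nlinarith
    have harg : ((1 - (q:ℝ)) * δ - ((-1:ℤ):ℝ) * h - δ) / (h - δ) = s := by
      rw [hs, hh] at *
      push_cast
      field_simp
      ring
    rw [harg]
    simp only [Pfun]
    push_cast
    ring
  refine ⟨hval, fun hle => ?_⟩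
  have hu : (0:ℝ) ≤ 1 - s := by linarith
  have hP0 : 0 ≤ 6*s^5 - 15*s^4 + 10*s^3 := by
    nlinarith [mul_nonneg (pow_nonneg hs0 3) (sq_nonneg (4*s-5)), pow_nonneg hs0 3]
  have hP1 : 6*s^5 - 15*s^4 + 10*s^3 ≤ 1 := by
    nlinarith [mul_nonneg (pow_nonneg hu 3) (sq_nonneg (4*(1-s)-5)), pow_nonneg hu 3]
  rw [hval]
  constructor <;> nlinarith
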